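/- Let q be a nonzero complex number and let A_q be the quantum plane with parameter q over ℂ, with X, Y the images of the two generators. Then the family of monomials (i, j) ↦ Y^i · X^j, indexed by pairs of natural numbers (i, j), is a basis of A_q as a ℂ-vector space. In particular, for every natural number r, the r-th homogeneous component of A_q (the image in A_q of the span of all products of exactly r generators of the free algebra) has ℂ-dimension r + 1, so A_q has polynomial growth. -/

import Mathlib

open FreeAlgebra

/-- The free associative ℂ-algebra on two generators. -/
abbrev FreeTwo : Type := FreeAlgebra ℂ (Fin 2)

/-- The ℂ-span of the generators of the free algebra; its `r`-th power is the
span of all products of exactly `r` generators. -/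
noncomputable def gens : Submodule ℂ FreeTwo :=
  Submodule.span ℂ (Set.range (ι ℂ : Fin 2 → FreeTwo))

/-- The defining relation of the quantum plane with parameter `q`:
`x * y = q • (y * x)`. -/
def quantumRel (q : ℂ) : FreeTwo → FreeTwo → Prop :=
  fun a b => a = ι ℂ 0 * ι ℂ 1 ∧ b = q • (ι ℂ 1 * ι ℂ 0)

/-- The quantum plane `ℂ⟨x,y⟩/(xy - q·yx)`. -/
abbrev QuantumPlane (q : ℂ) : Type := RingQuot (quantumRel q)

/-- The image `X` of the generator `x` in the quantum plane. -/
noncomputable def QX (q : ℂ) : QuantumPlane q :=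
  RingQuot.mkAlgHom ℂ (quantumRel q) (ι ℂ 0)

/-- The image `Y` of the generator `y` in the quantum plane. -/
noncomputable def QY (q : ℂ) : QuantumPlane q :=
  RingQuot.mkAlgHom ℂ (quantumRel q) (ι ℂ 1)

namespace QPaux

variable (q : ℂ)

lemma hXY : QX q * QY q = q • (QY q * QX q) := by
  have h := RingQuot.mkAlgHom_rel ℂ (s := quantumRel q)
    (x := ι ℂ 0 * ι ℂ 1) (y := q • (ι ℂ 1 * ι ℂ 0)) ⟨rfl, rfl⟩
  simpa [QX, QY, map_mul, map_smul] using h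

lemma X_Ypow (k : ℕ) : QX q * QY q ^ k = q ^ k • (QY q ^ k * QX q) := by
  induction k with
  | zero => simp
  | succ k ih =>
    calc QX q * QY q ^ (k + 1) = (QX q * QY q) * QY q ^ k := by
          rw [pow_succ', mul_assoc]
      _ = q • (QY q * (QX q * QY q ^ k)) := by rw [hXY, smul_mul_assoc, mul_assoc]
      _ = q • (QY q * (q ^ k • (QY q ^ k * QX q))) := by rw [ih]
      _ = q ^ (k + 1) • (QY q ^ (k + 1) * QX q) := by
          rw [mul_smul_comm, smul_smul, ← pow_succ', pow_succ' (QY q), mul_assoc]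

lemma Xpow_Ypow (j k : ℕ) :
    QX q ^ j * QY q ^ k = q ^ (j * k) • (QY q ^ k * QX q ^ j) := by
  induction j with
  | zero => simp
  | succ j ih =>
    calc QX q ^ (j + 1) * QY q ^ k = QX q * (QX q ^ j * QY q ^ k) := by
          rw [pow_succ', mul_assoc]
      _ = q ^ (j * k) • (QX q * QY q ^ k * QX q ^ j) := by
          rw [ih, mul_smul_comm, mul_assoc]
      _ = q ^ (j * k) • (q ^ k • (QY q ^ k * QX q * QX q ^ j)) := by
          rw [X_Ypow, smul_mul_assoc]
      _ = q ^ ((j + 1) * k) • (QY q ^ k * QX q ^ (j + 1)) := by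
          rw [smul_smul, ← pow_add, mul_assoc, ← pow_succ']
          ring_nf

/-- the monomial family -/
noncomputable def v (p : ℕ × ℕ) : QuantumPlane q := QY q ^ p.1 * QX q ^ p.2

lemma v_mul (p p' : ℕ × ℕ) :
    v q p * v q p' = q ^ (p.2 * p'.1) • v q (p.1 + p'.1, p.2 + p'.2) := by
  calc v q p * v q p'
      = QY q ^ p.1 * (QX q ^ p.2 * QY q ^ p'.1) * QX q ^ p'.2 := by
        simp [v, mul_assoc]
    _ = q ^ (p.2 * p'.1) • (QY q ^ p.1 * (QY q ^ p'.1 * QX q ^ p.2) * QX q ^ p'.2) := by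
        rw [Xpow_Ypow]; simp [smul_mul_assoc, mul_smul_comm]
    _ = q ^ (p.2 * p'.1) • v q (p.1 + p'.1, p.2 + p'.2) := by
        simp only [v, pow_add]
        congr 1
        simp [mul_assoc]

/-! ### A representation on `(ℕ × ℕ) →₀ ℂ` -/

noncomputable def Xhat : Module.End ℂ ((ℕ × ℕ) →₀ ℂ) :=
  Finsupp.lsum ℂ fun p => q ^ p.1 • Finsupp.lsingle (p.1, p.2 + 1)

noncomputable def Yhat : Module.End ℂ ((ℕ × ℕ) →₀ ℂ) :=
  Finsupp.lmapDomain ℂ ℂ fun p => (p.1 + 1, p.2)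

lemma Xhat_single (i j : ℕ) (c : ℂ) :
    Xhat q (Finsupp.single (i, j) c) = q ^ i • Finsupp.single (i, j + 1) c := by
  simp [Xhat]

lemma Yhat_single (i j : ℕ) (c : ℂ) :
    Yhat (Finsupp.single (i, j) c) = Finsupp.single (i + 1, j) c := by
  simp [Yhat, Finsupp.lmapDomain_apply, Finsupp.mapDomain_single]

lemma hcomm : Xhat q * Yhat = q • (Yhat * Xhat q) := by
  apply Finsupp.lhom_ext
  rintro ⟨i, j⟩ c
  simp only [Module.End.mul_apply, LinearMap.smul_apply, Xhat_single, Yhat_single,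
    map_smul]
  rw [smul_smul, ← pow_succ']

noncomputable def F : FreeTwo →ₐ[ℂ] Module.End ℂ ((ℕ × ℕ) →₀ ℂ) :=
  FreeAlgebra.lift ℂ ![Xhat q, Yhat]

noncomputable def G : QuantumPlane q →ₐ[ℂ] Module.End ℂ ((ℕ × ℕ) →₀ ℂ) :=
  RingQuot.liftAlgHom ℂ ⟨F q, by
    rintro _ _ ⟨rfl, rfl⟩
    simp only [map_mul, map_smul, F, FreeAlgebra.lift_ι_apply, Matrix.cons_val_zero,
      Matrix.cons_val_one, Matrix.head_cons]
    exact hcomm q⟩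

lemma G_X : G q (QX q) = Xhat q := by
  rw [QX, G, RingQuot.liftAlgHom_mkAlgHom_apply]
  simp [F]

lemma G_Y : G q (QY q) = Yhat := by
  rw [QY, G, RingQuot.liftAlgHom_mkAlgHom_apply]
  simp [F]

noncomputable def L : QuantumPlane q →ₗ[ℂ] ((ℕ × ℕ) →₀ ℂ) where
  toFun a := G q a (Finsupp.single (0, 0) 1)
  map_add' a b := by simp
  map_smul' c a := by simp

lemma Xhat_pow (j : ℕ) :
    (Xhat q ^ j) (Finsupp.single ((0 : ℕ), (0 : ℕ)) 1) = Finsupp.single (0, j) 1 := by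
  induction j with
  | zero => simp
  | succ j ih =>
    rw [pow_succ', Module.End.mul_apply, ih, Xhat_single]
    simp

lemma Yhat_pow (i j : ℕ) :
    (Yhat ^ i) (Finsupp.single ((0 : ℕ), j) 1) = Finsupp.single (i, j) 1 := by
  induction i with
  | zero => simp
  | succ i ih =>
    rw [pow_succ', Module.End.mul_apply, ih, Yhat_single]

lemma L_v (p : ℕ × ℕ) : L q (v q p) = Finsupp.single p 1 := by
  obtain ⟨i, j⟩ := p
  show (G q (QY q ^ i * QX q ^ j)) (Finsupp.single (0, 0) 1) = _
  rw [map_mul, map_pow, map_pow, G_X, G_Y, Module.End.mul_apply, Xhat_pow, Yhat_pow]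

lemma li : LinearIndependent ℂ (v q) := by
  apply LinearIndependent.of_comp (L q)
  have h : (L q) ∘ (v q) = fun p : ℕ × ℕ => Finsupp.single p (1 : ℂ) :=
    funext fun p => L_v q p
  rw [h]
  have := (Finsupp.basisSingleOne (ι := ℕ × ℕ) (R := ℂ)).linearIndependent
  simpa using this

lemma span_v : Submodule.span ℂ (Set.range (v q)) = ⊤ := by
  set S := Submodule.span ℂ (Set.range (v q)) with hS
  have hmul : ∀ x ∈ S, ∀ y ∈ S, x * y ∈ S := by
    have hSS : S * S ≤ S := by
      rw [hS, Submodule.span_mul_span]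
      apply Submodule.span_le.mpr
      rintro z hz
      rw [Set.mem_mul] at hz
      obtain ⟨x, ⟨p, rfl⟩, y, ⟨p', rfl⟩, rfl⟩ := hz
      rw [v_mul]
      exact Submodule.smul_mem _ _ (Submodule.subset_span ⟨_, rfl⟩)
    intro x hx y hy
    exact hSS (Submodule.mul_mem_mul hx hy)
  rw [eq_top_iff]
  rintro a -
  obtain ⟨b, rfl⟩ := RingQuot.mkAlgHom_surjective ℂ (quantumRel q) a
  induction b using FreeAlgebra.induction with
  | grade0 r =>
    rw [AlgHom.commutes, Algebra.algebraMap_eq_smul_one]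
    have h1 : (1 : QuantumPlane q) = v q (0, 0) := by simp [v]
    rw [h1]
    exact Submodule.smul_mem _ _ (Submodule.subset_span ⟨_, rfl⟩)
  | grade1 x =>
    fin_cases x
    · show RingQuot.mkAlgHom ℂ (quantumRel q) (ι ℂ 0) ∈ S
      have h01 : RingQuot.mkAlgHom ℂ (quantumRel q) (ι ℂ 0) = v q (0, 1) := by
        simp [v, QX]
      rw [h01]; exact Submodule.subset_span ⟨_, rfl⟩
    · show RingQuot.mkAlgHom ℂ (quantumRel q) (ι ℂ 1) ∈ S
      have h10 : RingQuot.mkAlgHom ℂ (quantumRel q) (ι ℂ 1) = v q (1, 0) := by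
        simp [v, QY]
      rw [h10]; exact Submodule.subset_span ⟨_, rfl⟩
  | mul a b ha hb =>
    rw [map_mul]; exact hmul _ ha _ hb
  | add a b ha hb =>
    rw [map_add]; exact add_mem ha hb

noncomputable def B : Module.Basis (ℕ × ℕ) ℂ (QuantumPlane q) :=
  Module.Basis.mk (li q) (by rw [span_v])

lemma B_apply (p : ℕ × ℕ) : B q p = v q p := Module.Basis.mk_apply _ _ _

lemma map_gens_pow (r : ℕ) :
    Submodule.map (RingQuot.mkAlgHom ℂ (quantumRel q)).toLinearMap (gens ^ r) =
      Submodule.span ℂ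
        (Set.range fun i : Fin (r + 1) => QY q ^ (i : ℕ) * QX q ^ (r - (i : ℕ))) := by
  induction r with
  | zero =>
    rw [pow_zero, Submodule.map_one, Submodule.one_eq_span]
    congr 1
    ext a
    simp [eq_comm]
  | succ r ih =>
    have hmapgens :
        Submodule.map (RingQuot.mkAlgHom ℂ (quantumRel q)).toLinearMap gens =
          Submodule.span ℂ {QX q, QY q} := by
      rw [gens, Submodule.map_span]
      congr 1
      ext a
      constructor
      · rintro ⟨_, ⟨x, rfl⟩, rfl⟩
        fin_cases x
        · left; rfl
        · right; rfl
      · rintro (rfl | rfl)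
        · exact ⟨_, ⟨0, rfl⟩, rfl⟩
        · exact ⟨_, ⟨1, rfl⟩, rfl⟩
    rw [pow_succ' gens, Submodule.map_mul, hmapgens, ih, Submodule.span_mul_span]
    apply le_antisymm
    · apply Submodule.span_le.mpr
      rintro z hz
      rw [Set.mem_mul] at hz
      obtain ⟨a, ha, b, ⟨i, rfl⟩, rfl⟩ := hz
      have hi : (i : ℕ) ≤ r := Nat.lt_succ_iff.mp i.isLt
      rcases ha with rfl | rfl
      · have h1 : QX q * (QY q ^ (i : ℕ) * QX q ^ (r - (i : ℕ))) =
            q ^ (i : ℕ) • (QY q ^ (i : ℕ) * QX q ^ (r + 1 - (i : ℕ))) := by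
          rw [← mul_assoc, X_Ypow, smul_mul_assoc, mul_assoc, ← pow_succ']
          congr 3
          omega
        rw [h1]
        exact Submodule.smul_mem _ _
          (Submodule.subset_span ⟨⟨(i : ℕ), by omega⟩, rfl⟩)
      · have h1 : QY q * (QY q ^ (i : ℕ) * QX q ^ (r - (i : ℕ))) =
            QY q ^ ((i : ℕ) + 1) * QX q ^ (r + 1 - ((i : ℕ) + 1)) := by
          rw [← mul_assoc, ← pow_succ']
          congr 2
          omega
        rw [h1]
        exact Submodule.subset_span ⟨⟨(i : ℕ) + 1, by omega⟩, rfl⟩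
    · apply Submodule.span_le.mpr
      rintro _ ⟨j, rfl⟩
      refine Submodule.subset_span ?_
      dsimp only
      rcases Fin.eq_zero_or_eq_succ j with rfl | ⟨k, rfl⟩
      · have h1 : QY q ^ (0 : ℕ) * QX q ^ (r + 1 - 0) =
            QX q * (QY q ^ (0 : ℕ) * QX q ^ (r - 0)) := by
          simp [pow_succ']
        rw [Fin.val_zero, h1]
        exact Set.mul_mem_mul (Set.mem_insert _ _) ⟨0, by simp⟩
      · have hk : (k : ℕ) ≤ r := Nat.lt_succ_iff.mp k.isLt
        have heq : r + 1 - ((k : ℕ) + 1) = r - (k : ℕ) := by omega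
        rw [Fin.val_succ, heq, pow_succ', mul_assoc]
        exact Set.mul_mem_mul (Set.mem_insert_of_mem _ rfl) ⟨k, rfl⟩

end QPaux

/-- The monomials `Y^i * X^j` form a ℂ-basis of the quantum plane with nonzero
parameter `q`, and the image in the quantum plane of the degree-`r` homogeneous
component of the free algebra has dimension `r + 1`: the quantum plane has
polynomial growth. -/
theorem quantumPlane_basis_and_polynomial_growth (q : ℂ) (hq : q ≠ 0) :
    (∃ b : Module.Basis (ℕ × ℕ) ℂ (QuantumPlane q),
      ∀ i j : ℕ, b (i, j) = QY q ^ i * QX q ^ j) ∧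
    ∀ r : ℕ,
      Module.finrank ℂ
        (Submodule.map (RingQuot.mkAlgHom ℂ (quantumRel q)).toLinearMap
          (gens ^ r)) = r + 1 := by
  constructor
  · exact ⟨QPaux.B q, fun i j => QPaux.B_apply q (i, j)⟩
  · intro r
    rw [QPaux.map_gens_pow]
    have hinj : Function.Injective
        (fun i : Fin (r + 1) => (((i : ℕ), r - (i : ℕ)) : ℕ × ℕ)) := by
      intro a b h
      exact Fin.val_injective (congrArg Prod.fst h)
    have hli : LinearIndependent ℂ
        (fun i : Fin (r + 1) => QY q ^ (i : ℕ) * QX q ^ (r - (i : ℕ))) := by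
      have h0 := (QPaux.B q).linearIndependent.comp _ hinj
      have h2 : (⇑(QPaux.B q) ∘ fun i : Fin (r + 1) => (((i : ℕ), r - (i : ℕ)) : ℕ × ℕ)) =
          fun i : Fin (r + 1) => QY q ^ (i : ℕ) * QX q ^ (r - (i : ℕ)) :=
        funext fun i => by simp [QPaux.B_apply, QPaux.v]
      exact h2 ▸ h0
    rw [finrank_span_eq_card hli, Fintype.card_fin]
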